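/- Identify 2^ℕ with the Cantor group (ℤ/2ℤ)^ℕ with pointwise addition, and let μ be the Haar (uniform product) measure. Let A ⊆ 2^ℕ be an Fσ set with μ(A) = 1 which is meager. Define P ⊆ 2^ℕ × 2^ℕ by P(x, y) iff there exists x' E₀ x with x' + y ∈ A. Then P is Fσ, E₀-invariant in the first coordinate, μ(P_x) = 1 for all x, and P admits no Borel E₀-invariant uniformization. -/

import Mathlib

open Set MeasureTheory

/-- The eventual-equality relation `E₀` on Cantor space. -/
def E0 (x y : ℕ → Bool) : Prop := ∀ᶠ n in Filter.atTop, x n = y n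

/-- Addition in the Cantor group `(ℤ/2ℤ)^ℕ`, i.e. pointwise xor. -/
def cadd (x y : ℕ → Bool) : ℕ → Bool := fun n => xor (x n) (y n)

/-- The set `P(x, y) ⟺ ∃ x' E₀ x, x' + y ∈ A`. -/
def PA (A : Set (ℕ → Bool)) : Set ((ℕ → Bool) × (ℕ → Bool)) :=
  {p | ∃ x', E0 x' p.1 ∧ cadd x' p.2 ∈ A}

/-! ### Auxiliary lemmas -/

lemma e0_refl (x : ℕ → Bool) : E0 x x := Filter.Eventually.of_forall fun _ => rfl

lemma e0_symm {x y : ℕ → Bool} (h : E0 x y) : E0 y x := h.mono fun _ a => a.symm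

lemma e0_trans {x y z : ℕ → Bool} (h1 : E0 x y) (h2 : E0 y z) : E0 x z :=
  h2.mp (h1.mono fun _ a b => a.trans b)

lemma cadd_cadd (g x : ℕ → Bool) : cadd g (cadd g x) = x :=
  funext fun n => by simp only [cadd]; cases g n <;> cases x n <;> rfl

lemma cadd_left_assoc (g x y : ℕ → Bool) : cadd (cadd g x) y = cadd g (cadd x y) :=
  funext fun n => by simp only [cadd]; cases g n <;> cases x n <;> cases y n <;> rfl

lemma cadd_swap (g x y : ℕ → Bool) : cadd (cadd g x) y = cadd (cadd g y) x :=
  funext fun n => by simp only [cadd]; cases g n <;> cases x n <;> cases y n <;> rfl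

lemma continuous_cadd (g : ℕ → Bool) : Continuous (cadd g) :=
  continuous_pi fun n =>
    (continuous_of_discreteTopology (f := fun b => xor (g n) b)).comp (continuous_apply n)

lemma continuous_cadd2 : Continuous (fun p : (ℕ → Bool) × (ℕ → Bool) => cadd p.1 p.2) :=
  continuous_pi fun n => by
    have h : (fun p : (ℕ → Bool) × (ℕ → Bool) => cadd p.1 p.2 n)
        = (fun q : Bool × Bool => xor q.1 q.2) ∘ (fun p => (p.1 n, p.2 n)) := rfl
    rw [h]
    exact continuous_of_discreteTopology.comp
      (((continuous_apply n).comp continuous_fst).prodMk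
        ((continuous_apply n).comp continuous_snd))

lemma measurable_cadd (g : ℕ → Bool) : Measurable (cadd g) :=
  measurable_pi_lambda _ fun n =>
    (measurable_from_top (f := fun b => xor (g n) b)).comp (measurable_pi_apply n)

/-- Translation by `g` as a homeomorphism of Cantor space. -/
def caddHomeo (g : ℕ → Bool) : (ℕ → Bool) ≃ₜ (ℕ → Bool) where
  toFun := cadd g
  invFun := cadd g
  left_inv := cadd_cadd g
  right_inv := cadd_cadd g
  continuous_toFun := continuous_cadd g
  continuous_invFun := continuous_cadd g

lemma isMeagre_preimage_cadd (g : ℕ → Bool) {s : Set (ℕ → Bool)} (h : IsMeagre s) :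
    IsMeagre (cadd g ⁻¹' s) :=
  h.preimage_of_isOpenMap (continuous_cadd g) (caddHomeo g).isOpenMap

/-- The eventually-zero element of the Cantor group with support `s`. -/
noncomputable def gs (s : Finset ℕ) : ℕ → Bool := fun n => decide (n ∈ s)

lemma e0_gs (s : Finset ℕ) (x : ℕ → Bool) : E0 (cadd (gs s) x) x := by
  refine Filter.eventually_atTop.2 ⟨s.sup id + 1, fun n hn => ?_⟩
  have hns : n ∉ s := fun h => by
    have := Finset.le_sup (f := id) h
    simp only [id] at this
    omega
  simp [cadd, gs, hns]

lemma e0_iff {x' x : ℕ → Bool} : E0 x' x ↔ ∃ s : Finset ℕ, x' = cadd (gs s) x := by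
  constructor
  · intro h
    obtain ⟨N, hN⟩ := Filter.eventually_atTop.1 h
    refine ⟨(Finset.range N).filter (fun n => x' n ≠ x n), funext fun n => ?_⟩
    by_cases hx : x' n = x n
    · have hns : n ∉ (Finset.range N).filter (fun n => x' n ≠ x n) := by
        simp [hx]
      simp [cadd, gs, hns, hx]
    · have hn : n < N := by
        by_contra hc
        exact hx (hN n (by omega))
      have hns : n ∈ (Finset.range N).filter (fun n => x' n ≠ x n) := by
        simp [hx, hn]
      cases hxn : x' n <;> cases hx2 : x n <;> simp_all [cadd, gs]
  · rintro ⟨s, rfl⟩; exact e0_gs s x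

/-! ### Measure-theoretic lemmas -/

lemma cyl_measurable (s : Finset ℕ) (f : ℕ → Bool) :
    MeasurableSet {y : ℕ → Bool | ∀ n ∈ s, y n = f n} := by
  have h : {y : ℕ → Bool | ∀ n ∈ s, y n = f n}
      = ⋂ n ∈ s, (fun y : ℕ → Bool => y n) ⁻¹' {f n} := by
    ext y; simp
  rw [h]
  exact MeasurableSet.biInter s.countable_toSet fun n _ =>
    (measurable_pi_apply n) (measurableSet_singleton _)

lemma cylinder_singleton (s : Finset ℕ) (g : ∀ _ : s, Bool) :
    (cylinder s {g} : Set (ℕ → Bool))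
      = {y : ℕ → Bool | ∀ n ∈ s, y n = if h : n ∈ s then g ⟨n, h⟩ else false} := by
  ext y
  simp only [mem_cylinder, Set.mem_singleton_iff, funext_iff, Subtype.forall, Set.mem_setOf_eq]
  refine forall_congr' fun n => forall_congr' fun hn => ?_
  simp [Finset.restrict, dif_pos hn]

lemma measure_cylinder_eq (μ : Measure (ℕ → Bool))
    (hμ : ∀ (s : Finset ℕ) (f : ℕ → Bool),
      μ {y | ∀ n ∈ s, y n = f n} = (2 : ENNReal)⁻¹ ^ s.card)
    (s : Finset ℕ) (S : Set (∀ _ : s, Bool)) :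
    μ (cylinder s S) = (Set.toFinite S).toFinset.card * (2 : ENNReal)⁻¹ ^ s.card := by
  classical
  have hdec : cylinder s S
      = ⋃ g ∈ (Set.toFinite S).toFinset, (cylinder s {g} : Set (ℕ → Bool)) := by
    ext y
    simp [mem_cylinder, Set.Finite.mem_toFinset]
  rw [hdec, measure_biUnion_finset]
  · rw [Finset.sum_congr rfl (fun g _ => ?_), Finset.sum_const, nsmul_eq_mul]
    rw [cylinder_singleton]
    exact hμ s _
  · intro g hg g' hg' hgg'
    refine Set.disjoint_left.2 fun y hy hy' => hgg' ?_
    rw [mem_cylinder, Set.mem_singleton_iff] at hy hy'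
    rw [← hy, hy']
  · intro g hg
    rw [cylinder_singleton]
    exact cyl_measurable s _

lemma measure_unique (μ ν : Measure (ℕ → Bool)) [IsProbabilityMeasure μ] [IsProbabilityMeasure ν]
    (hμ : ∀ (s : Finset ℕ) (f : ℕ → Bool),
      μ {y | ∀ n ∈ s, y n = f n} = (2 : ENNReal)⁻¹ ^ s.card)
    (hν : ∀ (s : Finset ℕ) (f : ℕ → Bool),
      ν {y | ∀ n ∈ s, y n = f n} = (2 : ENNReal)⁻¹ ^ s.card) : μ = ν := by
  refine ext_of_generate_finite (measurableCylinders fun _ : ℕ => Bool)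
    generateFrom_measurableCylinders.symm isPiSystem_measurableCylinders
    (fun t ht => ?_) (by simp)
  obtain ⟨s, S, hS, rfl⟩ := (mem_measurableCylinders t).mp ht
  rw [measure_cylinder_eq μ hμ, measure_cylinder_eq ν hν]

lemma map_cadd_eq (μ : Measure (ℕ → Bool)) [IsProbabilityMeasure μ]
    (hμ : ∀ (s : Finset ℕ) (f : ℕ → Bool),
      μ {y | ∀ n ∈ s, y n = f n} = (2 : ENNReal)⁻¹ ^ s.card)
    (g : ℕ → Bool) : μ.map (cadd g) = μ := by
  have : IsProbabilityMeasure (μ.map (cadd g)) :=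
    Measure.isProbabilityMeasure_map (measurable_cadd g).aemeasurable
  refine measure_unique _ μ (fun s f => ?_) hμ
  rw [Measure.map_apply (measurable_cadd g) (cyl_measurable s f)]
  have h : cadd g ⁻¹' {y | ∀ n ∈ s, y n = f n}
      = {y : ℕ → Bool | ∀ n ∈ s, y n = xor (g n) (f n)} := by
    ext y
    simp only [Set.mem_preimage, Set.mem_setOf_eq, cadd]
    refine forall_congr' fun n => forall_congr' fun hn => ?_
    cases hg : g n <;> cases hy : y n <;> cases hf : f n <;> decide
  rw [h, hμ]

/-! ### Topological zero-one law for `E₀` -/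

lemma zero_one {S : Set (ℕ → Bool)} (hS : MeasurableSet S)
    (hinv : ∀ s : Finset ℕ, cadd (gs s) ⁻¹' S = S) : IsMeagre S ∨ IsMeagre Sᶜ := by
  classical
  obtain ⟨U, hU, hSU⟩ := hS.residualEq_isOpen
  have hD : IsMeagre {x | ¬ ((x ∈ S) = (x ∈ U))} := by
    simp only [IsMeagre, compl_setOf, not_not]
    exact hSU
  rcases eq_empty_or_nonempty U with rfl | ⟨x, hx⟩
  · left
    refine hD.mono fun y hy => ?_
    simp [hy]
  · right
    obtain ⟨I, u, hu, hsub⟩ := isOpen_pi_iff.1 hU x hx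
    set C : Set (ℕ → Bool) := {y | ∀ i ∈ I, y i = x i} with hC
    have hCU : C ⊆ U := fun y hy =>
      hsub (Set.mem_pi.2 fun i hi => by rw [hy i hi]; exact (hu i hi).2)
    have hCS : IsMeagre (C \ S) := by
      refine hD.mono fun y hy => ?_
      have h1 := hCU hy.1
      have h2 := hy.2
      simp [h1, h2]
    obtain ⟨e, he⟩ := exists_surjective_nat (Finset ℕ)
    have hcov : Sᶜ ⊆ ⋃ k : ℕ, cadd (gs (e k)) ⁻¹' (C \ S) := by
      intro y hyS
      set s := I.filter (fun i => y i ≠ x i) with hs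
      obtain ⟨k, hk⟩ := he s
      refine Set.mem_iUnion.2 ⟨k, ?_⟩
      rw [hk]
      refine ⟨fun i hi => ?_, fun hmem => ?_⟩
      · show xor (gs s i) (y i) = x i
        by_cases hyx : y i = x i
        · have hns : i ∉ s := by simp [hs, hyx]
          simp [gs, hns, hyx]
        · have hns : i ∈ s := by simp [hs, hyx, hi]
          cases h1 : y i <;> cases h2 : x i <;> simp_all [gs]
      · have hmem' : y ∈ cadd (gs s) ⁻¹' S := hmem
        rw [hinv s] at hmem'
        exact hyS hmem'
    exact (isMeagre_iUnion fun k => isMeagre_preimage_cadd _ hCS).mono hcov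

/-- If `A` is `Fσ`, `μ`-conull and meager (where `μ` is the Haar = uniform product
measure on the Cantor group), then `P(x,y) ⟺ ∃ x' E₀ x, x' + y ∈ A` is `Fσ`, `E₀`-invariant in
the first coordinate, has `μ`-conull sections, and admits no Borel `E₀`-invariant
uniformization. -/
theorem stmt4 (μ : Measure (ℕ → Bool)) [IsProbabilityMeasure μ]
    (hμ : ∀ (s : Finset ℕ) (f : ℕ → Bool),
      μ {y | ∀ n ∈ s, y n = f n} = (2 : ENNReal)⁻¹ ^ s.card)
    (A : Set (ℕ → Bool))
    (hAFsigma : ∃ F : ℕ → Set (ℕ → Bool), (∀ n, IsClosed (F n)) ∧ A = ⋃ n, F n)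
    (hAconull : μ A = 1) (hAmeager : IsMeagre A) :
    (∃ F : ℕ → Set ((ℕ → Bool) × (ℕ → Bool)),
        (∀ n, IsClosed (F n)) ∧ PA A = ⋃ n, F n) ∧
    (∀ x x', E0 x x' → ∀ y, ((x, y) ∈ PA A ↔ (x', y) ∈ PA A)) ∧
    (∀ x, μ {y | (x, y) ∈ PA A} = 1) ∧
    ¬ ∃ f : (ℕ → Bool) → (ℕ → Bool), Measurable f ∧ (∀ x, (x, f x) ∈ PA A) ∧
        ∀ x x', E0 x x' → f x = f x' := by
  classical
  obtain ⟨F, hFclosed, hFA⟩ := hAFsigma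
  have hAmeas : MeasurableSet A := by
    rw [hFA]; exact MeasurableSet.iUnion fun n => (hFclosed n).measurableSet
  have hPA : PA A = ⋃ s : Finset ℕ,
      (fun p : (ℕ → Bool) × (ℕ → Bool) => cadd (gs s) (cadd p.1 p.2)) ⁻¹' A := by
    ext p
    simp only [PA, Set.mem_setOf_eq, Set.mem_iUnion, Set.mem_preimage]
    constructor
    · rintro ⟨x', hE, hA'⟩
      obtain ⟨s, rfl⟩ := e0_iff.1 hE
      exact ⟨s, by rwa [cadd_left_assoc] at hA'⟩
    · rintro ⟨s, hA'⟩
      exact ⟨cadd (gs s) p.1, e0_gs s p.1, by rwa [cadd_left_assoc]⟩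
  refine ⟨?_, ?_, ?_, ?_⟩
  · -- Fσ
    obtain ⟨e, he⟩ := exists_surjective_nat (Finset ℕ × ℕ)
    refine ⟨fun k => (fun p : (ℕ → Bool) × (ℕ → Bool) =>
        cadd (gs (e k).1) (cadd p.1 p.2)) ⁻¹' F (e k).2,
      fun k => (hFclosed _).preimage ((continuous_cadd _).comp continuous_cadd2), ?_⟩
    rw [hPA]
    ext p
    simp only [Set.mem_iUnion, Set.mem_preimage, hFA]
    constructor
    · rintro ⟨s, n, hn⟩
      obtain ⟨k, hk⟩ := he (s, n)
      exact ⟨k, by rw [hk]; exact hn⟩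
    · rintro ⟨k, hk⟩
      exact ⟨(e k).1, ⟨(e k).2, hk⟩⟩
  · -- E₀-invariance
    intro x x' hE y
    constructor
    · rintro ⟨x'', h1, h2⟩
      exact ⟨x'', e0_trans h1 hE, h2⟩
    · rintro ⟨x'', h1, h2⟩
      exact ⟨x'', e0_trans h1 (e0_symm hE), h2⟩
  · -- conull sections
    intro x
    refine le_antisymm prob_le_one ?_
    have hsub : cadd x ⁻¹' A ⊆ {y | (x, y) ∈ PA A} := fun y hy => ⟨x, e0_refl x, hy⟩
    calc (1 : ENNReal) = μ A := hAconull.symm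
      _ = μ.map (cadd x) A := by rw [map_cadd_eq μ hμ x]
      _ = μ (cadd x ⁻¹' A) := Measure.map_apply (measurable_cadd x) hAmeas
      _ ≤ μ {y | (x, y) ∈ PA A} := measure_mono hsub
  · -- no invariant uniformization
    rintro ⟨f, hf, hfP, hfinv⟩
    set S : ℕ → Set (ℕ → Bool) := fun n => {x | f x n = true} with hSdef
    have hSmeas : ∀ n, MeasurableSet (S n) := fun n =>
      ((measurable_pi_apply n).comp hf) (measurableSet_singleton true)
    have hSinv : ∀ n (s : Finset ℕ), cadd (gs s) ⁻¹' S n = S n := by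
      intro n s
      ext x
      simp only [hSdef, Set.mem_preimage, Set.mem_setOf_eq]
      rw [hfinv _ x (e0_gs s x)]
    set y₀ : ℕ → Bool := fun n => if IsMeagre (S n) then false else true with hy₀
    have hT : ∀ n, IsMeagre {x | ¬ (f x n = y₀ n)} := by
      intro n
      by_cases hm : IsMeagre (S n)
      · have hv : y₀ n = false := by simp [hy₀, hm]
        rw [hv]
        refine hm.mono fun x hx => ?_
        show f x n = true
        simpa using hx
      · have hm' : IsMeagre (S n)ᶜ := (zero_one (hSmeas n) (hSinv n)).resolve_left hm
        have hv : y₀ n = true := by simp [hy₀, hm]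
        rw [hv]
        exact hm'.mono fun x hx => hx
    have hTmeager : IsMeagre {x | ¬ (f x = y₀)} := by
      refine (isMeagre_iUnion hT).mono fun x hx => ?_
      simp only [Set.mem_iUnion, Set.mem_setOf_eq]
      by_contra hc
      push_neg at hc
      exact hx (funext fun n => hc n)
    obtain ⟨e, he⟩ := exists_surjective_nat (Finset ℕ)
    have hcov : {x | f x = y₀} ⊆ ⋃ k : ℕ, cadd (cadd (gs (e k)) y₀) ⁻¹' A := by
      intro x hx
      obtain ⟨x', hE, hA'⟩ := hfP x
      obtain ⟨s, rfl⟩ := e0_iff.1 hE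
      obtain ⟨k, hk⟩ := he s
      refine Set.mem_iUnion.2 ⟨k, ?_⟩
      rw [hk]
      have heq : cadd (cadd (gs s) x) (f x) = cadd (cadd (gs s) y₀) x := by
        rw [hx, cadd_swap]
      show cadd (cadd (gs s) y₀) x ∈ A
      rwa [heq] at hA'
    have h1 : IsMeagre {x | f x = y₀} :=
      (isMeagre_iUnion fun k => isMeagre_preimage_cadd _ hAmeager).mono hcov
    have hres : (∅ : Set (ℕ → Bool)) ∈ residual _ := by
      refine Filter.mem_of_superset (Filter.inter_mem hTmeager h1) ?_
      rintro z ⟨hz1, hz2⟩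
      exact absurd (not_not.1 hz1) hz2
    have hdense : Dense (∅ : Set (ℕ → Bool)) := dense_of_mem_residual hres
    simpa using hdense (fun _ => false)
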